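/- Let D ⊆ ℝⁿ be a nonempty finite set of nonzero vectors. If CM(D) ≠ CM_D(D), then pspan(D) = span(D) and span(D) ≠ ℝⁿ. -/

import Mathlib

open scoped RealInnerProductSpace

noncomputable section

/-- The positive span of a set `D`: all finite nonnegative linear combinations
of elements of `D`. -/
def pspan {E : Type*} [AddCommGroup E] [Module ℝ E] (D : Set E) : Set E :=
  {x | ∃ (k : ℕ) (d : Fin k → E) (c : Fin k → ℝ),
    (∀ i, d i ∈ D) ∧ (∀ i, 0 ≤ c i) ∧ x = ∑ i, c i • d i}

/-- The cosine measure of `D` relative to a subspace `L`: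
`min` over unit vectors `u ∈ L` of `sup_{d ∈ D} ⟪u, d⟫ / ‖d‖`. -/
noncomputable def cmRel {E : Type*} [NormedAddCommGroup E] [InnerProductSpace ℝ E]
    (L : Submodule ℝ E) (D : Set E) : ℝ :=
  sInf ((fun u => sSup ((fun d => ⟪u, d⟫ / ‖d‖) '' D)) '' {u : E | u ∈ L ∧ ‖u‖ = 1})

/-- The cosine vector set of `D` relative to a subspace `L`: the set of unit
vectors `u ∈ L` attaining the minimum defining `cmRel L D`. -/
noncomputable def cVRel {E : Type*} [NormedAddCommGroup E] [InnerProductSpace ℝ E]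
    (L : Submodule ℝ E) (D : Set E) : Set E :=
  {u : E | u ∈ L ∧ ‖u‖ = 1 ∧ sSup ((fun d => ⟪u, d⟫ / ‖d‖) '' D) = cmRel L D}

section PspanBasic

variable {E : Type*} [AddCommGroup E] [Module ℝ E]
variable {F : Type*} [AddCommGroup F] [Module ℝ F]

lemma zero_mem_pspan' (D : Set E) : (0 : E) ∈ pspan D :=
  ⟨0, Fin.elim0, Fin.elim0, fun i => i.elim0, fun i => i.elim0, by simp⟩

lemma mem_pspan_of_mem' {D : Set E} {d : E} (hd : d ∈ D) : d ∈ pspan D :=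
  ⟨1, fun _ => d, fun _ => 1, fun _ => hd, fun _ => zero_le_one, by simp⟩

lemma smul_mem_pspan' {D : Set E} {x : E} {t : ℝ} (ht : 0 ≤ t) (hx : x ∈ pspan D) :
    t • x ∈ pspan D := by
  obtain ⟨k, d, c, hdD, hc, rfl⟩ := hx
  refine ⟨k, d, fun i => t * c i, hdD, fun i => mul_nonneg ht (hc i), ?_⟩
  rw [Finset.smul_sum]
  simp [smul_smul]

lemma add_mem_pspan' {D : Set E} {x y : E} (hx : x ∈ pspan D) (hy : y ∈ pspan D) :
    x + y ∈ pspan D := by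
  obtain ⟨k, d, c, hdD, hc, rfl⟩ := hx
  obtain ⟨l, e, b, heD, hb, rfl⟩ := hy
  refine ⟨k + l, Fin.append d e, Fin.append c b, ?_, ?_, ?_⟩
  · intro i
    exact Fin.addCases (motive := fun i => Fin.append d e i ∈ D)
      (fun i => by simp only [Fin.append_left]; exact hdD i)
      (fun i => by simp only [Fin.append_right]; exact heD i) i
  · intro i
    exact Fin.addCases (motive := fun i => 0 ≤ Fin.append c b i)
      (fun i => by simp only [Fin.append_left]; exact hc i)
      (fun i => by simp only [Fin.append_right]; exact hb i) i
  · rw [Fin.sum_univ_add]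
    simp [Fin.append_left, Fin.append_right]

lemma convex_pspan' (D : Set E) : Convex ℝ (pspan D) := by
  intro x hx y hy a b ha hb _
  exact add_mem_pspan' (smul_mem_pspan' ha hx) (smul_mem_pspan' hb hy)

lemma pspan_subset_span' {D : Set E} : pspan D ⊆ (Submodule.span ℝ D : Set E) := by
  rintro x ⟨k, d, c, hdD, hc, rfl⟩
  exact Submodule.sum_mem _ fun i _ =>
    Submodule.smul_mem _ _ (Submodule.subset_span (hdD i))

lemma pspan_image' (f : E →ₗ[ℝ] F) (D : Set E) : pspan (f '' D) = f '' pspan D := by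
  ext x
  constructor
  · rintro ⟨k, d, c, hdD, hc, rfl⟩
    choose g hg1 hg2 using hdD
    refine ⟨∑ i, c i • g i, ⟨k, g, c, hg1, hc, rfl⟩, ?_⟩
    simp [map_sum, hg2]
  · rintro ⟨y, ⟨k, d, c, hdD, hc, rfl⟩, rfl⟩
    exact ⟨k, fun i => f (d i), c, fun i => ⟨d i, hdD i, rfl⟩, hc, by simp [map_sum]⟩

end PspanBasic

/-- If for every unit vector there is a direction making positive inner product,
then the positive span is everything. -/
lemma pspan_eq_univ_of_pos {E : Type*} [NormedAddCommGroup E] [InnerProductSpace ℝ E]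
    [FiniteDimensional ℝ E] {D : Set E}
    (hD : ∀ u : E, ‖u‖ = 1 → ∃ d ∈ D, 0 < ⟪u, d⟫) : pspan D = Set.univ := by
  have hconv : Convex ℝ (pspan D) := convex_pspan' D
  have hcl : closure (pspan D) = Set.univ := by
    by_contra hne
    obtain ⟨x, hx⟩ := (Set.ne_univ_iff_exists_notMem _).1 hne
    obtain ⟨f, u, hfs, hfx⟩ :=
      geometric_hahn_banach_closed_point hconv.closure isClosed_closure hx
    have h0u : (0 : ℝ) < u := by
      simpa using hfs 0 (subset_closure (zero_mem_pspan' D))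
    have hle : ∀ d ∈ D, f d ≤ 0 := by
      intro d hd
      by_contra hpos
      push_neg at hpos
      have h2 := hfs ((u / f d) • d)
        (subset_closure (smul_mem_pspan' (le_of_lt (div_pos h0u hpos)) (mem_pspan_of_mem' hd)))
      rw [map_smul, smul_eq_mul, div_mul_cancel₀ _ (ne_of_gt hpos)] at h2
      exact lt_irrefl _ h2
    set v := (InnerProductSpace.toDual ℝ E).symm f with hv
    have hvy : ∀ y : E, ⟪v, y⟫ = f y := fun y => InnerProductSpace.toDual_symm_apply
    have hvne : v ≠ 0 := by
      intro hv0
      have h1 := hvy x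
      rw [hv0, inner_zero_left] at h1
      linarith
    have hnv : (0 : ℝ) < ‖v‖ := norm_pos_iff.2 hvne
    obtain ⟨d, hd, hdpos⟩ := hD (‖v‖⁻¹ • v)
      (by rw [norm_smul, norm_inv, norm_norm]; exact inv_mul_cancel₀ hnv.ne')
    have hinn : ⟪‖v‖⁻¹ • v, d⟫ = ‖v‖⁻¹ * f d := by rw [real_inner_smul_left, hvy]
    have hfd := hle d hd
    nlinarith [inv_nonneg.2 (norm_nonneg v)]
  have haff : affineSpan ℝ (pspan D) = ⊤ := by
    have hsub : Set.univ ⊆ (affineSpan ℝ (pspan D) : Set E) := by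
      rw [← hcl]
      exact closure_minimal (subset_affineSpan ℝ _)
        (affineSpan ℝ (pspan D)).closed_of_finiteDimensional
    exact eq_top_iff.2 fun x _ => hsub (Set.mem_univ x)
  obtain ⟨x₀, hx₀⟩ := hconv.interior_nonempty_iff_affineSpan_eq_top.2 haff
  ext y
  simp only [Set.mem_univ, iff_true]
  have hz : (2 : ℝ) • y - x₀ ∈ closure (pspan D) := by rw [hcl]; trivial
  have hmem := hconv.combo_interior_closure_mem_interior hx₀ hz
    (a := 1/2) (b := 1/2) (by norm_num) (by norm_num) (by norm_num)
  have hy : (1/2 : ℝ) • x₀ + (1/2 : ℝ) • ((2 : ℝ) • y - x₀) = y := by module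
  rw [hy] at hmem
  exact interior_subset hmem

lemma stmt12_aux {E : Type*} [NormedAddCommGroup E] [InnerProductSpace ℝ E]
    [FiniteDimensional ℝ E] (D : Set E) (hne : D.Nonempty)
    (hfin : D.Finite) (h0 : (0 : E) ∉ D)
    (h : cmRel (⊤ : Submodule ℝ E) D ≠ cmRel (Submodule.span ℝ D) D) :
    pspan D = (Submodule.span ℝ D : Set E) ∧
      Submodule.span ℝ D ≠ (⊤ : Submodule ℝ E) := by
  set K : Submodule ℝ E := Submodule.span ℝ D with hK
  set f : E → ℝ := fun u => sSup ((fun d => ⟪u, d⟫ / ‖d‖) '' D) with hf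
  have hcm : ∀ L : Submodule ℝ E, cmRel L D = sInf (f '' {u : E | u ∈ L ∧ ‖u‖ = 1}) :=
    fun L => rfl
  have hDnorm : ∀ d ∈ D, (0 : ℝ) < ‖d‖ := fun d hd =>
    norm_pos_iff.2 (fun hd0 => h0 (hd0 ▸ hd))
  have hSne : ∀ u : E, ((fun d => ⟪u, d⟫ / ‖d‖) '' D).Nonempty := fun u => hne.image _
  have hSfin : ∀ u : E, ((fun d => ⟪u, d⟫ / ‖d‖) '' D).Finite := fun u => hfin.image _
  have hfge : ∀ u : E, ‖u‖ = 1 → -1 ≤ f u := by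
    intro u hu1
    obtain ⟨d₀, hd₀⟩ := hne
    have h1 : ⟪u, d₀⟫ / ‖d₀‖ ≤ f u := le_csSup (hSfin u).bddAbove ⟨d₀, hd₀, rfl⟩
    have h2 : -1 ≤ ⟪u, d₀⟫ / ‖d₀‖ := by
      rw [le_div_iff₀ (hDnorm d₀ hd₀)]
      have h3 := abs_real_inner_le_norm u d₀
      have h4 := neg_abs_le ⟪u, d₀⟫
      rw [hu1, one_mul] at h3
      linarith
    linarith
  have hbddT : ∀ L : Submodule ℝ E, BddBelow (f '' {u : E | u ∈ L ∧ ‖u‖ = 1}) := by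
    intro L
    refine ⟨-1, ?_⟩
    rintro y ⟨u, ⟨-, hu1⟩, rfl⟩
    exact hfge u hu1
  have hcmle : ∀ (L : Submodule ℝ E) (u : E), u ∈ L → ‖u‖ = 1 → cmRel L D ≤ f u := by
    intro L u huL hu1
    rw [hcm L]
    exact csInf_le (hbddT L) ⟨u, ⟨huL, hu1⟩, rfl⟩
  obtain ⟨d₀, hd₀⟩ := hne
  set u₀ : E := ‖d₀‖⁻¹ • d₀ with hu₀
  have hu₀1 : ‖u₀‖ = 1 := by
    rw [hu₀, norm_smul, norm_inv, norm_norm]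
    exact inv_mul_cancel₀ (hDnorm d₀ hd₀).ne'
  have hu₀K : u₀ ∈ K := K.smul_mem _ (Submodule.subset_span hd₀)
  have hKne : K ≠ ⊤ := by
    intro ht
    exact h (by rw [ht])
  have hpos : 0 < cmRel K D := by
    by_contra hle0
    push_neg at hle0
    apply h
    apply le_antisymm
    · rw [hcm ⊤, hcm K]
      refine csInf_le_csInf (hbddT ⊤) ⟨f u₀, ⟨u₀, ⟨hu₀K, hu₀1⟩, rfl⟩⟩ ?_
      exact Set.image_mono (fun u hu => ⟨trivial, hu.2⟩)
    · rw [hcm ⊤]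
      refine le_csInf ⟨f u₀, ⟨u₀, ⟨trivial, hu₀1⟩, rfl⟩⟩ ?_
      rintro b ⟨v, ⟨-, hv1⟩, rfl⟩
      set p : E := (K.orthogonalProjectionOnto v : E) with hp
      have hpK : p ∈ K := (K.orthogonalProjectionOnto v).2
      have hinner : ∀ d ∈ D, ⟪v, d⟫ = ⟪p, d⟫ := by
        intro d hd
        have horth : v - p ∈ Kᗮ := Submodule.sub_starProjection_mem_orthogonal (K := K) v
        have h1 := (Submodule.mem_orthogonal _ _).1 horth d (Submodule.subset_span hd)
        rw [real_inner_comm, inner_sub_left] at h1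
        linarith
      have hanorm : ‖p‖ ≤ 1 := by
        have h1 := (K.orthogonalProjectionOnto).le_opNorm v
        have h2 := Submodule.orthogonalProjectionOnto_norm_le K
        have h3 : ‖K.orthogonalProjectionOnto v‖ = ‖p‖ := Submodule.coe_norm _
        rw [hv1, mul_one, h3] at h1
        linarith
      by_cases hp0 : p = 0
      · have hall : ∀ y ∈ (fun d => ⟪v, d⟫ / ‖d‖) '' D, y = 0 := by
          rintro y ⟨d, hd, rfl⟩
          show ⟪v, d⟫ / ‖d‖ = 0
          rw [hinner d hd, hp0, inner_zero_left, zero_div]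
        have hset : (fun d => ⟪v, d⟫ / ‖d‖) '' D = {0} :=
          Set.eq_singleton_iff_nonempty_unique_mem.2 ⟨hSne v, hall⟩
        have hfv : f v = 0 := by
          show sSup ((fun d => ⟪v, d⟫ / ‖d‖) '' D) = 0
          rw [hset, csSup_singleton]
        rw [hfv]
        exact hle0
      · have hap : (0 : ℝ) < ‖p‖ := norm_pos_iff.2 hp0
        set a : ℝ := ‖p‖ with ha
        set w : E := a⁻¹ • p with hw
        have hw1 : ‖w‖ = 1 := by
          rw [hw, norm_smul, norm_inv, norm_norm]
          exact inv_mul_cancel₀ hap.ne'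
        have hwK : w ∈ K := K.smul_mem _ hpK
        have hcw : cmRel K D ≤ f w := hcmle K w hwK hw1
        have hpaw : p = a • w := by
          rw [hw, smul_smul, mul_inv_cancel₀ hap.ne', one_smul]
        have himg : (fun d => ⟪v, d⟫ / ‖d‖) '' D
            = (fun y => a * y) '' ((fun d => ⟪w, d⟫ / ‖d‖) '' D) := by
          rw [Set.image_image]
          apply Set.image_congr
          intro d hd
          show ⟪v, d⟫ / ‖d‖ = a * (⟪w, d⟫ / ‖d‖)
          rw [hinner d hd, hpaw, real_inner_smul_left]
          ring
        have hmax : f w ∈ (fun d => ⟪w, d⟫ / ‖d‖) '' D := (hSne w).csSup_mem (hSfin w)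
        have hub : ∀ y ∈ (fun d => ⟪w, d⟫ / ‖d‖) '' D, y ≤ f w :=
          fun y hy => le_csSup (hSfin w).bddAbove hy
        have hfv : f v = a * f w := by
          show sSup ((fun d => ⟪v, d⟫ / ‖d‖) '' D) = a * f w
          rw [himg]
          refine IsGreatest.csSup_eq ⟨⟨f w, hmax, rfl⟩, ?_⟩
          rintro y ⟨z, hz, rfl⟩
          exact mul_le_mul_of_nonneg_left (hub z hz) hap.le
        rcases le_or_gt 0 (f w) with hfw | hfw
        · rw [hfv]
          nlinarith [mul_nonneg hap.le hfw]
        · rw [hfv]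
          nlinarith [mul_nonneg (sub_nonneg.2 hanorm) (neg_nonneg.2 hfw.le)]
  have hforall : ∀ u : E, u ∈ K → ‖u‖ = 1 → ∃ d ∈ D, 0 < ⟪u, d⟫ := by
    intro u huK hu1
    have h1 : cmRel K D ≤ f u := hcmle K u huK hu1
    have h2 : f u ∈ (fun d => ⟪u, d⟫ / ‖d‖) '' D := (hSne u).csSup_mem (hSfin u)
    obtain ⟨d, hd, hdeq⟩ := h2
    refine ⟨d, hd, ?_⟩
    change ⟪u, d⟫ / ‖d‖ = f u at hdeq
    have h3 : 0 < ⟪u, d⟫ / ‖d‖ := by rw [hdeq]; linarith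
    rcases div_pos_iff.1 h3 with ⟨h4, -⟩ | ⟨-, h5⟩
    · exact h4
    · exact absurd h5 (not_lt.2 (norm_nonneg d))
  have hmain : pspan D = (K : Set E) := by
    set D' : Set K := Subtype.val ⁻¹' D with hD'
    have himg : (K.subtype : K →ₗ[ℝ] E) '' D' = D := by
      show Subtype.val '' (Subtype.val ⁻¹' D) = D
      rw [Set.image_preimage_eq_of_subset]
      rw [Subtype.range_coe]
      exact fun d hd => Submodule.subset_span hd
    have hA : pspan D' = Set.univ := by
      apply pspan_eq_univ_of_pos
      intro u hu1
      obtain ⟨d, hd, hdpos⟩ := hforall (u : E) u.2 (by rwa [← Submodule.coe_norm])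
      refine ⟨⟨d, Submodule.subset_span hd⟩, hd, ?_⟩
      rw [Submodule.coe_inner]
      exact hdpos
    calc pspan D = pspan ((K.subtype : K →ₗ[ℝ] E) '' D') := by rw [himg]
      _ = (K.subtype : K →ₗ[ℝ] E) '' pspan D' := pspan_image' _ _
      _ = (K : Set E) := by
          rw [hA, Set.image_univ]
          simp [Submodule.coe_subtype, Subtype.range_coe_subtype]
  exact ⟨hmain, hKne⟩

theorem stmt12 {n : ℕ} (D : Set (EuclideanSpace ℝ (Fin n))) (hne : D.Nonempty)
    (hfin : D.Finite) (h0 : (0 : EuclideanSpace ℝ (Fin n)) ∉ D)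
    (h : cmRel (⊤ : Submodule ℝ (EuclideanSpace ℝ (Fin n))) D ≠
      cmRel (Submodule.span ℝ D) D) :
    pspan D = (Submodule.span ℝ D : Set (EuclideanSpace ℝ (Fin n))) ∧
      Submodule.span ℝ D ≠ (⊤ : Submodule ℝ (EuclideanSpace ℝ (Fin n))) :=
  stmt12_aux D hne hfin h0 h
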